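/- arXiv:1305.1594 — 5 statements merged into one kernel-verified Lean document; each statement's English description precedes it below -/
import Mathlib

section
/- Suppose either (principal series case) that not all c_j equal 0 and not all c_j equal p−1, and set 𝒫 := 𝒫^{PS} and J_base := ∅; or (regular cuspidal case) that 0 < c_i < p−1 for some i ∈ S, and set 𝒫 := 𝒫^{cusp} and J_base := {i, i+1, …, f−1} for such an i. Define ι(J) := J △ J_base. Then for any subsets J ⊆ J' ⊆ S with ι(J) ∈ 𝒫 and ι(J') ∈ 𝒫, there exists a chain J = J_0 ⊊ J_1 ⊊ ⋯ ⊊ J_{|J'|−|J|} = J' of subsets of S with |J_m| = m + |J| and ι(J_m) ∈ 𝒫 for every m. -/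
open scoped symmDiff

/-- The collection `Pfam^{PS}` of subsets of `S = ℤ/f` (indices taken cyclically) attached to the
digits `c_j` in the principal series case:  those `J` such that `j ∈ J, j-1 ∉ J ⇒ c_j ≠ p-1`,
and `j ∉ J, j-1 ∈ J ⇒ c_j ≠ 0`. -/
def PPS (p f : ℕ) (c : ZMod f → ℕ) : Set (Finset (ZMod f)) :=
  {J | ∀ j : ZMod f, (j ∈ J → j - 1 ∉ J → c j ≠ p - 1) ∧ (j ∉ J → j - 1 ∈ J → c j ≠ 0)}

/-- The collection `Pfam^{cusp}` of subsets of `S = ℤ/f` attached to the digits `c_j` in the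
cuspidal case: with `J₀ := J ∆ {f-1}`, those `J` such that `j ∈ J, j-1 ∉ J₀ ⇒ c_j ≠ p-1`,
and `j ∉ J, j-1 ∈ J₀ ⇒ c_j ≠ 0`. -/
def Pcusp (p f : ℕ) (c : ZMod f → ℕ) : Set (Finset (ZMod f)) :=
  {J | ∀ j : ZMod f,
    (j ∈ J → j - 1 ∉ J ∆ ({-1} : Finset (ZMod f)) → c j ≠ p - 1) ∧
    (j ∉ J → j - 1 ∈ J ∆ ({-1} : Finset (ZMod f)) → c j ≠ 0)}

section Aux

variable {f : ℕ} [NeZero f]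


lemma xor_sep {A A' T : Prop} (hmono : A → A') (h1 : Xor' A T) (h2 : ¬ Xor' A' T) :
    A' ∧ ¬ A ∧ T := by
  unfold Xor' at h1 h2
  rw [xor_def] at h1 h2
  tauto

lemma xor_sep' {A A' T : Prop} (hmono : A → A') (h1 : ¬ Xor' A T) (h2 : Xor' A' T) :
    A' ∧ ¬ A ∧ ¬ T := by
  unfold Xor' at h1 h2
  rw [xor_def] at h1 h2
  tauto

/-- Abstract unified condition: with sign data `s t`, the condition that the "twisted" set
associated to `J` lies in the relevant family. -/
def Cond (p : ℕ) (c : ZMod f → ℕ) (s t : ZMod f → Prop) (J : Finset (ZMod f)) : Prop :=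
  ∀ j : ZMod f,
    (Xor' (j ∈ J) (s j) → ¬ Xor' (j - 1 ∈ J) (t j) → c j ≠ p - 1) ∧
    (¬ Xor' (j ∈ J) (s j) → Xor' (j - 1 ∈ J) (t j) → c j ≠ 0)

lemma step_lemma (p : ℕ) (c : ZMod f → ℕ) (s t : ZMod f → Prop)
    (hp : p - 1 ≠ 0)
    (h1 : ∃ j, ¬ ((t j ∧ c j = p - 1) ∨ (¬ t j ∧ c j = 0)))
    (h2 : ∃ j, ¬ ((¬ s j ∧ c j = p - 1) ∨ (s j ∧ c j = 0)))
    {J J' : Finset (ZMod f)} (hss : J ⊆ J') (hJ : Cond p c s t J) (hJ' : Cond p c s t J')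
    (hne : J ≠ J') : ∃ x ∈ J' \ J, Cond p c s t (insert x J) := by
  by_contra hcon
  push_neg at hcon
  have hDne : (J' \ J).Nonempty := by
    rw [Finset.sdiff_nonempty]; intro h; exact hne (Finset.Subset.antisymm hss h)
  by_cases hcard : (J' \ J).card = 1
  · obtain ⟨x, hx⟩ := Finset.card_eq_one.mp hcard
    have hxD : x ∈ J' \ J := hx ▸ Finset.mem_singleton_self x
    refine absurd ?_ (hcon x hxD)
    have hins : insert x J = J' := by
      have h1' : J' \ J ∪ J = J' := Finset.sdiff_union_of_subset hss
      rw [hx] at h1'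
      rw [← h1', Finset.insert_eq]
    rwa [hins]
  have hcard2 : 2 ≤ (J' \ J).card := by
    have := Finset.card_pos.mpr hDne
    omega
  have hf2 : 2 ≤ f := by
    calc 2 ≤ (J' \ J).card := hcard2
      _ ≤ Fintype.card (ZMod f) := Finset.card_le_univ _
      _ = f := ZMod.card f
  have h10 : (1 : ZMod f) ≠ 0 := by
    haveI : Fact (1 < f) := ⟨by omega⟩
    exact one_ne_zero
  have hsub : ∀ y : ZMod f, y ∈ J → y ∈ J' := fun y hy => hss hy
  -- Claim A: every x in the difference is "bad left" or "bad right"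
  have claimA : ∀ x ∈ J' \ J,
      (x - 1 ∈ J' \ J ∧ ((¬ s x ∧ c x = p - 1) ∨ (s x ∧ c x = 0))) ∨
      (x + 1 ∈ J' \ J ∧ ((t (x+1) ∧ c (x+1) = p - 1 ∧ s (x+1)) ∨
        (¬ t (x+1) ∧ c (x+1) = 0 ∧ ¬ s (x+1)))) := by
    intro x hxD
    obtain ⟨hxJ', hxJ⟩ := Finset.mem_sdiff.mp hxD
    have hx1 : x - 1 ≠ x := fun h => h10 (sub_eq_self.mp h)
    obtain ⟨j, hj⟩ : ∃ j : ZMod f,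
        ¬ ((Xor' (j ∈ insert x J) (s j) → ¬ Xor' (j - 1 ∈ insert x J) (t j) → c j ≠ p - 1) ∧
          (¬ Xor' (j ∈ insert x J) (s j) → Xor' (j - 1 ∈ insert x J) (t j) → c j ≠ 0)) := by
      have hbad := hcon x hxD
      simp only [Cond] at hbad
      exact not_forall.mp hbad
    have hjcase : j = x ∨ j = x + 1 := by
      by_contra hno
      push_neg at hno
      obtain ⟨hnx, hnx1⟩ := hno
      have e1 : (j ∈ insert x J) ↔ (j ∈ J) := by simp [Finset.mem_insert, hnx]
      have e2 : (j - 1 ∈ insert x J) ↔ (j - 1 ∈ J) := by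
        have hne' : j - 1 ≠ x := fun h => hnx1 (by rw [← h]; ring)
        simp [Finset.mem_insert, hne']
      rw [e1, e2] at hj
      exact hj (hJ j)
    rcases hjcase with rfl | rfl
    · -- failure at x itself
      left
      have e1 : (j ∈ insert j J) ↔ True := iff_of_true (Finset.mem_insert_self j J) trivial
      have e2 : (j - 1 ∈ insert j J) ↔ (j - 1 ∈ J) := by simp [Finset.mem_insert, hx1]
      rw [e1, e2] at hj
      rcases not_and_or.mp hj with hf | hf <;> push_neg at hf <;>
        obtain ⟨hA, hB, hC⟩ := hf
      · have hsx : ¬ s j := by simpa [Xor'] using hA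
        have hB' : Xor' (j - 1 ∈ J') (t j) := by
          by_contra hcontra
          exact (hJ' j).1 (Or.inl ⟨hxJ', hsx⟩) hcontra hC
        obtain ⟨u, v, -⟩ := xor_sep' (hsub (j - 1)) hB hB'
        exact ⟨Finset.mem_sdiff.mpr ⟨u, v⟩, Or.inl ⟨hsx, hC⟩⟩
      · have hsx : s j := by simpa [Xor'] using hA
        have hB' : ¬ Xor' (j - 1 ∈ J') (t j) := by
          by_contra hcontra
          have hU' : ¬ Xor' (j ∈ J') (s j) := by simp [Xor', hxJ', hsx]
          exact (hJ' j).2 hU' hcontra hC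
        obtain ⟨u, v, -⟩ := xor_sep (hsub (j - 1)) hB hB'
        exact ⟨Finset.mem_sdiff.mpr ⟨u, v⟩, Or.inr ⟨hsx, hC⟩⟩
    · -- failure at x + 1
      right
      have hx1' : x + 1 ≠ x := fun h => h10 (by rwa [add_eq_left] at h)
      have e3 : x + 1 - 1 = x := by ring
      have e1 : (x + 1 ∈ insert x J) ↔ (x + 1 ∈ J) := by simp [Finset.mem_insert, hx1']
      have e2 : (x + 1 - 1 ∈ insert x J) ↔ True := by
        rw [e3]
        exact iff_of_true (Finset.mem_insert_self x J) trivial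
      rw [e1, e2] at hj
      rcases not_and_or.mp hj with hf | hf <;> push_neg at hf <;>
        obtain ⟨hA, hB, hC⟩ := hf
      · have ht : t (x+1) := by simpa [Xor'] using hB
        have hU' : ¬ Xor' (x + 1 ∈ J') (s (x+1)) := by
          by_contra hcontra
          have hV' : ¬ Xor' (x + 1 - 1 ∈ J') (t (x+1)) := by
            rw [e3]; simp [Xor', hxJ', ht]
          exact (hJ' (x+1)).1 hcontra hV' hC
        obtain ⟨u, v, hs1⟩ := xor_sep (hsub (x+1)) hA hU'
        exact ⟨Finset.mem_sdiff.mpr ⟨u, v⟩, Or.inl ⟨ht, hC, hs1⟩⟩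
      · have ht : ¬ t (x+1) := by simpa [Xor'] using hB
        have hU' : Xor' (x + 1 ∈ J') (s (x+1)) := by
          by_contra hcontra
          have hV' : Xor' (x + 1 - 1 ∈ J') (t (x+1)) := by
            rw [e3]; simp [Xor', hxJ', ht]
          exact (hJ' (x+1)).2 hcontra hV' hC
        obtain ⟨u, v, hs1⟩ := xor_sep' (hsub (x+1)) hA hU'
        exact ⟨Finset.mem_sdiff.mpr ⟨u, v⟩, Or.inr ⟨ht, hC, hs1⟩⟩
  have hne0 : ∀ a : ZMod f, ¬ (c a = p - 1 ∧ c a = 0) := by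
    intro a ⟨u, v⟩; omega
  by_cases hBRex : ∃ x ∈ J' \ J, (x + 1 ∈ J' \ J ∧ ((t (x+1) ∧ c (x+1) = p - 1 ∧ s (x+1)) ∨
      (¬ t (x+1) ∧ c (x+1) = 0 ∧ ¬ s (x+1))))
  · -- badness propagates to the right around the whole cycle
    obtain ⟨x, hxD, hxBR⟩ := hBRex
    have key : ∀ n : ℕ, ((x + n) + 1 ∈ J' \ J ∧
        ((t ((x+n)+1) ∧ c ((x+n)+1) = p - 1 ∧ s ((x+n)+1)) ∨
          (¬ t ((x+n)+1) ∧ c ((x+n)+1) = 0 ∧ ¬ s ((x+n)+1)))) := by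
      intro n
      induction n with
      | zero => simpa using hxBR
      | succ k ih =>
        obtain ⟨hmem, hdis⟩ := ih
        have hcast : (x + ((k:ℕ)+1 : ℕ) : ZMod f) = (x + k) + 1 := by push_cast; ring
        rw [hcast]
        rcases claimA _ hmem with hBL | hBR
        · exfalso
          obtain ⟨-, hd2⟩ := hBL
          rcases hdis with ⟨ht, hcv, hsv⟩ | ⟨ht, hcv, hsv⟩ <;>
            rcases hd2 with ⟨hs', hc'⟩ | ⟨hs', hc'⟩ <;>
              first
                | exact hs' hsv
                | exact hsv hs'
                | omega
        · exact hBR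
    obtain ⟨j0, hj0⟩ := h1
    exfalso
    apply hj0
    have hk := key ((j0 - 1 - x).val)
    have hcast : x + (((j0 - 1 - x).val : ℕ) : ZMod f) = j0 - 1 := by
      rw [ZMod.natCast_rightInverse (j0 - 1 - x)]; ring
    rw [hcast, show j0 - 1 + 1 = j0 from by ring] at hk
    rcases hk.2 with ⟨u, v, -⟩ | ⟨u, v, -⟩
    · exact Or.inl ⟨u, v⟩
    · exact Or.inr ⟨u, v⟩
  · -- everyone is "bad left": propagate to the left around the whole cycle
    have hallBL : ∀ x ∈ J' \ J,
        (x - 1 ∈ J' \ J ∧ ((¬ s x ∧ c x = p - 1) ∨ (s x ∧ c x = 0))) := by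
      intro x hx
      rcases claimA x hx with h | h
      · exact h
      · exact absurd ⟨x, hx, h⟩ hBRex
    obtain ⟨x0, hx0⟩ := hDne
    have key : ∀ n : ℕ, (x0 - (n : ZMod f)) ∈ J' \ J := by
      intro n
      induction n with
      | zero => simpa using hx0
      | succ k ih =>
        have hmem := (hallBL _ ih).1
        have hcast : (x0 - ((k:ℕ)+1 : ℕ) : ZMod f) = (x0 - k) - 1 := by push_cast; ring
        rw [hcast]
        exact hmem
    obtain ⟨j0, hj0⟩ := h2
    exfalso
    apply hj0
    have hk := hallBL _ (key ((x0 - j0).val))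
    have hcast : x0 - (((x0 - j0).val : ℕ) : ZMod f) = j0 := by
      rw [ZMod.natCast_rightInverse (x0 - j0)]; ring
    rw [hcast] at hk
    exact hk.2

lemma chain_lemma (p : ℕ) (c : ZMod f → ℕ) (s t : ZMod f → Prop)
    (hp : p - 1 ≠ 0)
    (h1 : ∃ j, ¬ ((t j ∧ c j = p - 1) ∨ (¬ t j ∧ c j = 0)))
    (h2 : ∃ j, ¬ ((¬ s j ∧ c j = p - 1) ∨ (s j ∧ c j = 0))) :
    ∀ n : ℕ, ∀ J J' : Finset (ZMod f), J ⊆ J' → Cond p c s t J → Cond p c s t J' →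
      (J' \ J).card = n →
      ∃ chain : ℕ → Finset (ZMod f), chain 0 = J ∧ chain n = J' ∧
        (∀ m ≤ n, (chain m).card = m + J.card ∧ Cond p c s t (chain m)) ∧
        (∀ m < n, chain m ⊂ chain (m + 1)) := by
  intro n
  induction n with
  | zero =>
    intro J J' hss hJ hJ' hcard
    have hJeq : J = J' := by
      have : J' \ J = ∅ := Finset.card_eq_zero.mp hcard
      exact Finset.Subset.antisymm hss (Finset.sdiff_eq_empty_iff_subset.mp this)
    refine ⟨fun _ => J, rfl, hJeq.symm ▸ rfl, ?_, ?_⟩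
    · intro m hm
      have : m = 0 := Nat.le_zero.mp hm
      subst this
      exact ⟨(Nat.zero_add _).symm, hJ⟩
    · intro m hm; omega
  | succ k ih =>
    intro J J' hss hJ hJ' hcard
    have hne : J ≠ J' := by
      intro h; subst h
      simp at hcard
    obtain ⟨x, hxD, hCx⟩ := step_lemma p c s t hp h1 h2 hss hJ hJ' hne
    obtain ⟨hxJ', hxJ⟩ := Finset.mem_sdiff.mp hxD
    set J1 := insert x J with hJ1
    have hss1 : J1 ⊆ J' := Finset.insert_subset hxJ' hss
    have hcardJ1 : J1.card = J.card + 1 := Finset.card_insert_of_notMem hxJ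
    have hcard1 : (J' \ J1).card = k := by
      have e1 : (J' \ J).card = J'.card - J.card := Finset.card_sdiff_of_subset hss
      have e2 : (J' \ J1).card = J'.card - J1.card := Finset.card_sdiff_of_subset hss1
      have e3 : J.card ≤ J'.card := Finset.card_le_card hss
      have e4 : J1.card ≤ J'.card := Finset.card_le_card hss1
      omega
    obtain ⟨ch, hch0, hchk, hchmain, hchlt⟩ := ih J1 J' hss1 hCx hJ' hcard1
    refine ⟨fun m => match m with | 0 => J | (m+1) => ch m, rfl, hchk, ?_, ?_⟩
    · intro m hm
      match m with
      | 0 => exact ⟨(Nat.zero_add _).symm, hJ⟩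
      | (m+1) =>
        obtain ⟨hc1, hc2⟩ := hchmain m (by omega)
        refine ⟨?_, hc2⟩
        show (ch m).card = (m + 1) + J.card
        omega
    · intro m hm
      match m with
      | 0 =>
        show J ⊂ ch 0
        rw [hch0]
        exact Finset.ssubset_insert hxJ
      | (m+1) =>
        exact hchlt m (by omega)

end Aux

theorem statement15 (p f : ℕ) (hp : p.Prime) [NeZero f] (c : ZMod f → ℕ)
    (hc : ∀ j, c j ≤ p - 1)
    (Pfam : Set (Finset (ZMod f))) (Jbase : Finset (ZMod f))
    (hcase :
      ((¬ ∀ j, c j = 0) ∧ (¬ ∀ j, c j = p - 1) ∧ Pfam = PPS p f c ∧ Jbase = ∅) ∨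
      (∃ i : ZMod f, (0 < c i ∧ c i < p - 1) ∧ Pfam = Pcusp p f c ∧
        Jbase = Finset.univ.filter fun j : ZMod f => i.val ≤ j.val))
    (J J' : Finset (ZMod f)) (hJJ' : J ⊆ J')
    (hJ : J ∆ Jbase ∈ Pfam) (hJ' : J' ∆ Jbase ∈ Pfam) :
    ∃ chain : ℕ → Finset (ZMod f),
      chain 0 = J ∧ chain (J'.card - J.card) = J' ∧
      (∀ m ≤ J'.card - J.card, (chain m).card = m + J.card ∧ chain m ∆ Jbase ∈ Pfam) ∧
      ∀ m < J'.card - J.card, chain m ⊂ chain (m + 1) := by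
  have hp' : p - 1 ≠ 0 := Nat.sub_ne_zero_of_lt hp.one_lt
  obtain ⟨s, t, h1, h2, hiff⟩ :
      ∃ s t : ZMod f → Prop,
        (∃ j, ¬ ((t j ∧ c j = p - 1) ∨ (¬ t j ∧ c j = 0))) ∧
        (∃ j, ¬ ((¬ s j ∧ c j = p - 1) ∨ (s j ∧ c j = 0))) ∧
        (∀ K : Finset (ZMod f), (K ∆ Jbase ∈ Pfam ↔ Cond p c s t K)) := by
    rcases hcase with ⟨hc0, hcp, rfl, rfl⟩ | ⟨i, ⟨hc1, hc2⟩, rfl, rfl⟩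
    · refine ⟨fun _ => False, fun _ => False, ?_, ?_, ?_⟩
      · push_neg at hc0
        obtain ⟨j, hj⟩ := hc0
        exact ⟨j, by simp [hj]⟩
      · push_neg at hcp
        obtain ⟨j, hj⟩ := hcp
        exact ⟨j, by simp [hj]⟩
      · intro K
        rw [show K ∆ (∅ : Finset (ZMod f)) = K from by
          rw [← Finset.bot_eq_empty]; exact symmDiff_bot K]
        unfold PPS Cond
        simp [Xor', xor_def]
    · refine ⟨fun j => i.val ≤ j.val, fun j => Xor' (i.val ≤ (j - 1).val) (j = 0), ?_, ?_, ?_⟩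
      · exact ⟨i, by rintro (⟨-, h⟩ | ⟨-, h⟩) <;> omega⟩
      · exact ⟨i, by rintro (⟨-, h⟩ | ⟨-, h⟩) <;> omega⟩
      · intro K
        have e1 : ∀ j : ZMod f,
            (j ∈ K ∆ (Finset.univ.filter fun j : ZMod f => i.val ≤ j.val) ↔
              Xor' (j ∈ K) (i.val ≤ j.val)) := by
          intro j
          simp [Finset.mem_symmDiff, Xor', xor_def, Finset.mem_filter]
        have e2 : ∀ j : ZMod f,
            (j - 1 ∈ (K ∆ (Finset.univ.filter fun j : ZMod f => i.val ≤ j.val)) ∆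
                ({-1} : Finset (ZMod f)) ↔
              Xor' (j - 1 ∈ K) (Xor' (i.val ≤ (j - 1).val) (j = 0))) := by
          intro j
          have hz : (j - 1 = -1) ↔ (j = 0) := by
            constructor <;> intro h
            · have := congrArg (· + 1) h
              simpa using this
            · rw [h]; ring
          simp only [Finset.mem_symmDiff, Finset.mem_singleton, Finset.mem_filter,
            Finset.mem_univ, true_and, Xor', xor_def, hz]
          tauto
        unfold Pcusp Cond
        simp only [Set.mem_setOf_eq]
        refine forall_congr' fun j => ?_
        rw [e1 j, e2 j]
  obtain ⟨chain, h0, hn, hmain, hlt⟩ :=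
    chain_lemma p c s t hp' h1 h2 (J'.card - J.card) J J' hJJ'
      ((hiff J).mp hJ) ((hiff J').mp hJ') (Finset.card_sdiff_of_subset hJJ')
  exact ⟨chain, h0, hn, fun m hm => ⟨(hmain m hm).1, (hiff _).mpr (hmain m hm).2⟩, hlt⟩
end

section
/- (1) There exists i ∈ S with 0 < c_i < p−1 if and only if there exists i ∈ S such that both {i, i+1, …, f−1} ∈ 𝒫^{cusp} and {0, 1, …, i−1} ∈ 𝒫^{cusp}. (2) If no i ∈ S satisfies 0 < c_i < p−1 (i.e. every c_i lies in {0, p−1}), then there is exactly one J ∈ 𝒫^{cusp} such that s_{J,i} ≠ p−1 for all i ∈ S, where s_{J,i} := p−1−c_i−δ_{(J_0)^c}(i−1) if i ∈ J and s_{J,i} := c_i−δ_{J_0}(i−1) if i ∉ J (δ_X the indicator function of X ⊆ S). -/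
open scoped symmDiff

/-- The quantity `s_{J,i}`: `p - 1 - c_i - δ_{(J₀)ᶜ}(i-1)` if `i ∈ J`, and
`c_i - δ_{J₀}(i-1)` if `i ∉ J`, where `J₀ = J ∆ {f-1}`. -/
def sCusp (p : ℕ) {f : ℕ} (c : ZMod f → ℕ) (J : Finset (ZMod f)) (i : ZMod f) : ℤ :=
  if i ∈ J then
    (p : ℤ) - 1 - (c i : ℤ) - (if i - 1 ∈ J ∆ ({-1} : Finset (ZMod f)) then 0 else 1)
  else
    (c i : ℤ) - (if i - 1 ∈ J ∆ ({-1} : Finset (ZMod f)) then 1 else 0)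

lemma aux_val_neg_one (f : ℕ) [NeZero f] : ((-1 : ZMod f)).val = f - 1 := by
  obtain ⟨m, rfl⟩ := Nat.exists_eq_succ_of_ne_zero (NeZero.ne f)
  exact ZMod.val_neg_one m

lemma aux_one_le_val {f : ℕ} [NeZero f] {j : ZMod f} (hj : j ≠ 0) : 1 ≤ j.val :=
  Nat.one_le_iff_ne_zero.2 fun h => hj ((ZMod.val_eq_zero j).1 h)

lemma aux_val_sub_one {f : ℕ} [NeZero f] {j : ZMod f} (hj : j ≠ 0) :
    (j - 1).val = j.val - 1 := by
  have h1 : 1 ≤ j.val := aux_one_le_val hj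
  have : ((j.val - 1 : ℕ) : ZMod f) = j - 1 := by
    rw [Nat.cast_sub h1, ZMod.natCast_zmod_val, Nat.cast_one]
  rw [← this, ZMod.val_cast_of_lt (lt_of_le_of_lt (Nat.sub_le _ _) (ZMod.val_lt j))]

lemma aux_sub_one_eq_neg_one {f : ℕ} {j : ZMod f} : j - 1 = -1 ↔ j = 0 := by
  constructor <;> intro h
  · have := congrArg (· + 1) h
    simpa using this
  · simp [h]

lemma aux_mem_symm {f : ℕ} [NeZero f] {J : Finset (ZMod f)} {x : ZMod f} :
    x ∈ J ∆ ({-1} : Finset (ZMod f)) ↔ ¬ (x ∈ J ↔ x = -1) := by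
  simp only [Finset.mem_symmDiff, Finset.mem_singleton]
  tauto

lemma aux_not_mem_symm {f : ℕ} [NeZero f] {J : Finset (ZMod f)} {x : ZMod f} :
    x ∉ J ∆ ({-1} : Finset (ZMod f)) ↔ (x ∈ J ↔ x = -1) := by
  rw [aux_mem_symm, not_not]

lemma up_mem (p f : ℕ) [NeZero f] (c : ZMod f → ℕ) (i : ZMod f) :
    (Finset.univ.filter fun j : ZMod f => i.val ≤ j.val) ∈ Pcusp p f c ↔ c i ≠ p - 1 := by
  have hfi := ZMod.val_lt i
  constructor
  · intro hJ
    refine (hJ i).1 (by simp) ?_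
    rw [aux_not_mem_symm]
    simp only [Finset.mem_filter, Finset.mem_univ, true_and, aux_sub_one_eq_neg_one]
    by_cases hi : i = 0
    · subst hi
      rw [zero_sub, aux_val_neg_one, ZMod.val_zero]
      exact ⟨fun _ => rfl, fun _ => Nat.zero_le _⟩
    · rw [aux_val_sub_one hi]
      have := aux_one_le_val hi
      exact ⟨fun h => absurd h (by omega), fun h => absurd h hi⟩
  · intro hci j
    constructor
    · intro hjm hnm
      simp only [Finset.mem_filter, Finset.mem_univ, true_and] at hjm
      rw [aux_not_mem_symm] at hnm
      simp only [Finset.mem_filter, Finset.mem_univ, true_and, aux_sub_one_eq_neg_one] at hnm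
      by_cases hj : j = 0
      · subst hj
        have : i = 0 := (ZMod.val_eq_zero i).1 (by simpa using hjm)
        rwa [← this]
      · have h1 := aux_one_le_val hj
        rw [aux_val_sub_one hj] at hnm
        have : i.val = j.val := by
          rcases hnm with ⟨h2, h3⟩
          by_contra hne
          exact hj (h2 (by omega))
        have : i = j := ZMod.val_injective f this
        rwa [← this]
    · intro hjm hm
      exfalso
      simp only [Finset.mem_filter, Finset.mem_univ, true_and, not_le] at hjm
      rw [aux_mem_symm] at hm
      simp only [Finset.mem_filter, Finset.mem_univ, true_and, aux_sub_one_eq_neg_one] at hm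
      apply hm
      by_cases hj : j = 0
      · subst hj
        rw [zero_sub, aux_val_neg_one]
        rw [ZMod.val_zero] at hjm
        exact ⟨fun _ => rfl, fun h => by omega⟩
      · rw [aux_val_sub_one hj]
        have := aux_one_le_val hj
        exact ⟨fun h => absurd h (by omega), fun h => absurd h hj⟩

lemma lo_mem (p f : ℕ) [NeZero f] (c : ZMod f → ℕ) (i : ZMod f) :
    (Finset.univ.filter fun j : ZMod f => j.val < i.val) ∈ Pcusp p f c ↔ c i ≠ 0 := by
  have hfi := ZMod.val_lt i
  constructor
  · intro hJ
    refine (hJ i).2 (by simp) ?_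
    rw [aux_mem_symm]
    simp only [Finset.mem_filter, Finset.mem_univ, true_and, aux_sub_one_eq_neg_one]
    by_cases hi : i = 0
    · subst hi
      rw [zero_sub, aux_val_neg_one, ZMod.val_zero]
      intro h
      have := h.2 rfl
      omega
    · rw [aux_val_sub_one hi]
      have := aux_one_le_val hi
      intro h
      exact hi (h.1 (by omega))
  · intro hci j
    constructor
    · intro hjm hnm
      exfalso
      simp only [Finset.mem_filter, Finset.mem_univ, true_and] at hjm
      rw [aux_not_mem_symm] at hnm
      simp only [Finset.mem_filter, Finset.mem_univ, true_and, aux_sub_one_eq_neg_one] at hnm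
      by_cases hj : j = 0
      · subst hj
        have := hnm.2 rfl
        rw [zero_sub, aux_val_neg_one] at this
        simp only [ZMod.val_zero] at hjm
        omega
      · have h1 := aux_one_le_val hj
        rw [aux_val_sub_one hj] at hnm
        exact hj (hnm.1 (by omega))
    · intro hjm hm
      simp only [Finset.mem_filter, Finset.mem_univ, true_and, not_lt] at hjm
      rw [aux_mem_symm] at hm
      simp only [Finset.mem_filter, Finset.mem_univ, true_and, aux_sub_one_eq_neg_one] at hm
      by_cases hj : j = 0
      · subst hj
        have : i = 0 := (ZMod.val_eq_zero i).1 (by simp only [ZMod.val_zero] at hjm; omega)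
        rwa [← this]
      · have h1 := aux_one_le_val hj
        have hjv : (j - 1).val = j.val - 1 := aux_val_sub_one hj
        have : i.val = j.val := by
          by_contra hne
          apply hm
          rw [hjv]
          exact ⟨fun h => absurd h (by omega), fun h => absurd h hj⟩
        have : i = j := ZMod.val_injective f this
        rwa [← this]

/-- (1) There exists `i` with `0 < c_i < p-1` iff there exists `i` such that
both `{i, …, f-1}` and `{0, …, i-1}` lie in `𝒫^{cusp}`.  (2) If every `c_i ∈ {0, p-1}`, then
there is exactly one `J ∈ 𝒫^{cusp}` with `s_{J,i} ≠ p-1` for all `i`. -/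
theorem statement16 (p f : ℕ) (hp : p.Prime) [NeZero f] (c : ZMod f → ℕ)
    (hc : ∀ i, c i ≤ p - 1) :
    ((∃ i : ZMod f, 0 < c i ∧ c i < p - 1) ↔
      (∃ i : ZMod f,
        (Finset.univ.filter fun j : ZMod f => i.val ≤ j.val) ∈ Pcusp p f c ∧
        (Finset.univ.filter fun j : ZMod f => j.val < i.val) ∈ Pcusp p f c)) ∧
    ((∀ i : ZMod f, c i = 0 ∨ c i = p - 1) →
      ∃! J : Finset (ZMod f), J ∈ Pcusp p f c ∧
        ∀ i : ZMod f, sCusp p c J i ≠ (p : ℤ) - 1) := by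
  have h2 : 2 ≤ p := hp.two_le
  constructor
  · constructor
    · rintro ⟨i, h0, h1⟩
      exact ⟨i, (up_mem p f c i).2 (by omega), (lo_mem p f c i).2 (by omega)⟩
    · rintro ⟨i, hu, hl⟩
      have hu' := (up_mem p f c i).1 hu
      have hl' := (lo_mem p f c i).1 hl
      have := hc i
      exact ⟨i, by omega, by omega⟩
  · intro hc2
    have hcast : ((p - 1 : ℕ) : ℤ) = (p : ℤ) - 1 := by omega
    have key : ∀ J : Finset (ZMod f),
        (J ∈ Pcusp p f c ∧ ∀ i : ZMod f, sCusp p c J i ≠ (p : ℤ) - 1) ↔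
        ∀ i : ZMod f, (i - 1 ∈ J ∆ ({-1} : Finset (ZMod f)) ↔ c i = p - 1) := by
      intro J
      constructor
      · rintro ⟨hJ, hs⟩ i
        rcases hc2 i with h0 | h1
        · constructor
          · intro hmem
            by_cases hiJ : i ∈ J
            · exfalso
              apply hs i
              unfold sCusp
              rw [if_pos hiJ, if_pos hmem, h0]
              push_cast
              ring
            · exact absurd h0 ((hJ i).2 hiJ hmem)
          · intro h
            exfalso
            omega
        · refine ⟨fun _ => h1, fun _ => ?_⟩
          by_contra hmem
          by_cases hiJ : i ∈ J
          · exact (hJ i).1 hiJ hmem h1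
          · apply hs i
            unfold sCusp
            rw [if_neg hiJ, if_neg hmem, h1, hcast]
            ring
      · intro H
        constructor
        · intro j
          refine ⟨fun _ hnm hcj => hnm ((H j).2 hcj), fun _ hm hcj => ?_⟩
          have := (H j).1 hm
          omega
        · intro i
          rcases hc2 i with h0 | h1
          · have hm : i - 1 ∉ J ∆ ({-1} : Finset (ZMod f)) := fun hm => by
              have := (H i).1 hm
              omega
            unfold sCusp
            rw [h0]
            by_cases hiJ : i ∈ J
            · rw [if_pos hiJ, if_neg hm]
              push_cast
              omega
            · rw [if_neg hiJ, if_neg hm]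
              push_cast
              omega
          · have hm : i - 1 ∈ J ∆ ({-1} : Finset (ZMod f)) := (H i).2 h1
            unfold sCusp
            rw [h1, hcast]
            by_cases hiJ : i ∈ J
            · rw [if_pos hiJ, if_pos hm]
              omega
            · rw [if_neg hiJ, if_pos hm]
              omega
    set K : Finset (ZMod f) := Finset.univ.filter fun j : ZMod f => c (j + 1) = p - 1 with hK
    refine ⟨K ∆ ({-1} : Finset (ZMod f)), (key _).2 ?_, ?_⟩
    · intro i
      rw [symmDiff_symmDiff_cancel_right, hK]
      simp only [Finset.mem_filter, Finset.mem_univ, true_and, sub_add_cancel]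
    · rintro J hJs
      have hH := (key J).1 hJs
      have hJ0 : J ∆ ({-1} : Finset (ZMod f)) = K := by
        ext x
        have := hH (x + 1)
        rw [add_sub_cancel_right] at this
        rw [this, hK]
        simp only [Finset.mem_filter, Finset.mem_univ, true_and]
      calc J = J ∆ ({-1} : Finset (ZMod f)) ∆ ({-1} : Finset (ZMod f)) :=
              (symmDiff_symmDiff_cancel_right _ _).symm
        _ = K ∆ ({-1} : Finset (ZMod f)) := by rw [hJ0]
end

section
/- Let R be a commutative local ring, and let M'' ⊊ M' ⊆ M be R-modules (M'' a proper submodule of M', and M' a submodule of M). If M' is a cyclic R-module and M/M'' is a cyclic R-module, then M is a cyclic R-module. -/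
/-- Let `R` be a commutative local ring, and let `M'' ⊊ M' ⊆ M` be
`R`-modules.  If `M'` is a cyclic `R`-module and `M/M''` is a cyclic `R`-module, then `M` is
a cyclic `R`-module. -/
theorem statement17 {R : Type*} [CommRing R] [IsLocalRing R]
    {M : Type*} [AddCommGroup M] [Module R M]
    (M'' M' : Submodule R M) (hlt : M'' < M')
    (hM' : ∃ x : M, Submodule.span R {x} = M')
    (hQ : ∃ q : M ⧸ M'', Submodule.span R {q} = ⊤) :
    ∃ m : M, Submodule.span R {m} = ⊤ := by
  obtain ⟨x, hx⟩ := hM'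
  obtain ⟨q, hq⟩ := hQ
  obtain ⟨y, rfl⟩ := Submodule.Quotient.mk_surjective M'' q
  -- span {y} ⊔ M'' = ⊤
  have hsup : Submodule.span R {y} ⊔ M'' = ⊤ := by
    have hmap : Submodule.map M''.mkQ (Submodule.span R {y}) = ⊤ := by
      rw [Submodule.map_span, Set.image_singleton]
      exact hq
    rw [Submodule.map_mkQ_eq_top] at hmap
    rwa [sup_comm] at hmap
  -- x ∉ M''
  have hxM'' : x ∉ M'' := fun h => by
    have : M' ≤ M'' := hx ▸ (Submodule.span_singleton_le_iff_mem x M'').2 h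
    exact absurd (le_antisymm hlt.le this) hlt.ne
  -- decompose x
  have hxtop : x ∈ Submodule.span R {y} ⊔ M'' := hsup ▸ Submodule.mem_top
  obtain ⟨a, ha, b, hb, hab⟩ := Submodule.mem_sup.mp hxtop
  obtain ⟨r, rfl⟩ := Submodule.mem_span_singleton.mp ha
  have hbM' : b ∈ M' := hlt.le hb
  rw [← hx] at hbM'
  obtain ⟨s, rfl⟩ := Submodule.mem_span_singleton.mp hbM'
  -- s is not a unit
  have hs : ¬ IsUnit s := fun hu => by
    obtain ⟨u, rfl⟩ := hu
    have : x = (↑u⁻¹ : R) • ((u : R) • x) := by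
      rw [smul_smul, Units.inv_mul, one_smul]
    exact hxM'' (this ▸ Submodule.smul_mem _ _ hb)
  have h1s : IsUnit (1 - s) := by
    by_contra h
    exact (IsLocalRing.isUnit_or_isUnit_of_add_one (a := 1 - s) (b := s) (by ring)).elim h hs
  -- x ∈ span {y}
  have hxy : x ∈ Submodule.span R {y} := by
    obtain ⟨u, hu⟩ := h1s
    have h1 : (1 - s) • x = r • y := by
      rw [sub_smul, one_smul, sub_eq_iff_eq_add]
      exact hab.symm
    have : x = ((↑u⁻¹ : R) * r) • y := by
      rw [mul_smul, ← h1, ← hu, smul_smul, Units.inv_mul, one_smul]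
    rw [this]
    exact Submodule.smul_mem _ _ (Submodule.mem_span_singleton_self y)
  -- conclude
  refine ⟨y, ?_⟩
  have hM''le : M'' ≤ Submodule.span R {y} := le_trans hlt.le
    (hx ▸ (Submodule.span_singleton_le_iff_mem x _).2 hxy)
  rw [← hsup, sup_eq_left.mpr hM''le]
end

section
/- Let J_1 ⊆ J_2 ⊆ T. Then: (1) I_{ℱ(J_1,J_2)} is the ideal of R generated by {X_j : j ∈ J_1} ∪ {Y_j : j ∈ T ∖ J_2}; (2) I_{ℱ(J_1,J_2)^×} = I_{ℱ(J_1,J_2)} + (∏_{j ∈ J_2∖J_1} X_j); (3) the R-module I_{ℱ(J_1,J_2)^×}/I_{ℱ(J_1,J_2)} is cyclic, generated by the image of the element ∏_{j ∈ J_2∖J_1} X_j, its annihilator is P_{J_1}, and it is isomorphic as an R-module to R/P_{J_1}. -/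
set_option linter.unusedSectionVars false

noncomputable section
open MvPowerSeries

variable {σ K : Type} [CommRing K]

/-- The monomial ideal generated by exponents in `D`. -/
def monIdeal (D : Finset (σ →₀ ℕ)) : Ideal (MvPowerSeries σ K) :=
  Ideal.span ((fun d => monomial (R := K) d 1) '' (D : Set (σ →₀ ℕ)))

theorem monIdeal_mono {D D' : Finset (σ →₀ ℕ)} (h : D ⊆ D') :
    (monIdeal D : Ideal (MvPowerSeries σ K)) ≤ monIdeal D' :=
  Ideal.span_mono (Set.image_mono (by exact_mod_cast h))

private theorem mem_monIdeal_of_support (D : Finset (σ →₀ ℕ)) :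
    ∀ f : MvPowerSeries σ K, (∀ e, coeff (R := K) e f ≠ 0 → ∃ d ∈ D, d ≤ e) →
      f ∈ (monIdeal D : Ideal (MvPowerSeries σ K)) := by
  classical
  induction D using Finset.induction_on with
  | empty =>
    intro f hf
    have : f = 0 := by
      ext e
      by_contra he
      obtain ⟨d, hd, _⟩ := hf e he
      simp at hd
    simp [this]
  | @insert d D hd ih =>
    intro f hf
    set g : MvPowerSeries σ K := fun e => f (e + d) with hg
    have hmul : ∀ e, coeff (R := K) e (monomial (R := K) d 1 * g) = if d ≤ e then coeff (R := K) e f else 0 := by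
      intro e
      rw [coeff_monomial_mul]
      split_ifs with h
      · rw [one_mul]
        show g (e - d) = f e
        rw [hg]
        simp only []
        rw [tsub_add_cancel_of_le h]
      · rfl
    have h2 : f - monomial (R := K) d 1 * g ∈ (monIdeal D : Ideal (MvPowerSeries σ K)) := by
      refine ih _ ?_
      intro e he
      rw [map_sub, hmul] at he
      split_ifs at he with h
      · simp at he
      · rw [sub_zero] at he
        obtain ⟨d', hd', hle⟩ := hf e he
        rcases Finset.mem_insert.mp hd' with rfl | hmem
        · exact absurd hle h
        · exact ⟨d', hmem, hle⟩
    have h1 : monomial (R := K) d 1 * g ∈ (monIdeal (insert d D) : Ideal (MvPowerSeries σ K)) := by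
      refine Ideal.mul_mem_right _ _ (Ideal.subset_span ⟨d, ?_, rfl⟩)
      simp
    have := Ideal.add_mem _ (monIdeal_mono (Finset.subset_insert d D) h2) h1
    simpa using this

theorem mem_monIdeal {D : Finset (σ →₀ ℕ)} {f : MvPowerSeries σ K} :
    f ∈ (monIdeal D : Ideal (MvPowerSeries σ K)) ↔
      ∀ e, coeff (R := K) e f ≠ 0 → ∃ d ∈ D, d ≤ e := by
  classical
  constructor
  · intro hf
    refine Submodule.span_induction ?_ ?_ ?_ ?_ hf
    · rintro x ⟨d, hd, rfl⟩ e he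
      rw [coeff_monomial] at he
      split_ifs at he with h
      · exact ⟨d, by exact_mod_cast hd, h.ge⟩
      · exact absurd rfl he
    · intro e he; simp at he
    · intro x y _ _ hx hy e he
      by_cases h1 : coeff (R := K) e x ≠ 0
      · exact hx e h1
      · push_neg at h1
        refine hy e ?_
        intro h2
        rw [map_add, h1, h2, add_zero] at he; exact he rfl
    · intro r x _ hx e he
      rw [smul_eq_mul, coeff_mul] at he
      obtain ⟨p, hp, hpne⟩ := Finset.exists_ne_zero_of_sum_ne_zero he
      obtain ⟨d, hd, hde⟩ := hx p.2 (right_ne_zero_of_mul hpne)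
      refine ⟨d, hd, hde.trans ?_⟩
      rw [Finset.HasAntidiagonal.mem_antidiagonal] at hp
      exact hp ▸ le_add_self
  · exact mem_monIdeal_of_support D f

theorem prod_monomial {τ : Type} (S : Finset τ) (h : τ → (σ →₀ ℕ)) :
    (∏ j ∈ S, (monomial (R := K) (h j) 1 : MvPowerSeries σ K)) = monomial (R := K) (∑ j ∈ S, h j) 1 := by
  classical
  induction S using Finset.induction_on with
  | empty => simp
  | @insert a S ha ih =>
    rw [Finset.prod_insert ha, Finset.sum_insert ha, ih, monomial_mul_monomial, one_mul]

theorem mul_monomial_mem_monIdeal_iff {G : Finset (σ →₀ ℕ)} {a : MvPowerSeries σ K}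
    (s : σ →₀ ℕ) :
    a * monomial (R := K) s 1 ∈ (monIdeal G : Ideal (MvPowerSeries σ K)) ↔
      ∀ e, coeff (R := K) e a ≠ 0 → ∃ d ∈ G, d ≤ e + s := by
  rw [mem_monIdeal]
  constructor
  · intro h e he
    refine h (e + s) ?_
    rw [coeff_add_mul_monomial, mul_one]
    exact he
  · intro h e' he'
    rw [coeff_mul_monomial] at he'
    split_ifs at he' with hs
    · rw [mul_one] at he'
      obtain ⟨d, hd, hde⟩ := h (e' - s) he'
      exact ⟨d, hd, by rwa [tsub_add_cancel_of_le hs] at hde⟩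
    · exact absurd rfl he'

namespace S18aux
open Finsupp

variable {T : Type} [Fintype T] [DecidableEq T]

/-- Exponent of `X_j`. -/
def xe (j : T) : (T ⊕ T) →₀ ℕ := Finsupp.single (Sum.inl j) 1
/-- Exponent of `Y_j`. -/
def ye (j : T) : (T ⊕ T) →₀ ℕ := Finsupp.single (Sum.inr j) 1

theorem xe_le_iff {j : T} {e : (T ⊕ T) →₀ ℕ} : xe j ≤ e ↔ 1 ≤ e (Sum.inl j) :=
  Finsupp.single_le_iff

theorem ye_le_iff {j : T} {e : (T ⊕ T) →₀ ℕ} : ye j ≤ e ↔ 1 ≤ e (Sum.inr j) :=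
  Finsupp.single_le_iff

theorem xye_le_iff {j : T} {e : (T ⊕ T) →₀ ℕ} :
    xe j + ye j ≤ e ↔ 1 ≤ e (Sum.inl j) ∧ 1 ≤ e (Sum.inr j) := by
  constructor
  · intro h
    constructor
    · have := Finsupp.le_def.mp h (Sum.inl j)
      simpa [xe, ye, Finsupp.single_apply] using this
    · have := Finsupp.le_def.mp h (Sum.inr j)
      simpa [xe, ye, Finsupp.single_apply] using this
  · rintro ⟨h1, h2⟩
    rw [Finsupp.le_def]
    intro i
    rcases i with a | a
    · by_cases ha : a = j
      · subst ha; simpa [xe, ye, Finsupp.single_apply] using h1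
      · simp [xe, ye, Finsupp.single_apply, Ne.symm ha]
    · by_cases ha : a = j
      · subst ha; simpa [xe, ye, Finsupp.single_apply] using h2
      · simp [xe, ye, Finsupp.single_apply, Ne.symm ha]

/-- Exponent of `∏_{i ∈ S} X_i`. -/
def sE (S : Finset T) : (T ⊕ T) →₀ ℕ := ∑ i ∈ S, xe i

theorem sE_apply_inl (S : Finset T) (j : T) : sE S (Sum.inl j) = if j ∈ S then 1 else 0 := by
  rw [sE, Finsupp.finset_sum_apply]
  simp [xe, Finsupp.single_apply]

theorem sE_apply_inr (S : Finset T) (j : T) : sE S (Sum.inr j) = 0 := by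
  rw [sE, Finsupp.finset_sum_apply]
  simp [xe, Finsupp.single_apply]

theorem sE_le_iff {S : Finset T} {e : (T ⊕ T) →₀ ℕ} :
    sE S ≤ e ↔ ∀ i ∈ S, 1 ≤ e (Sum.inl i) := by
  rw [Finsupp.le_def]
  constructor
  · intro h i hi
    have := h (Sum.inl i)
    rwa [sE_apply_inl, if_pos hi] at this
  · intro h i
    rcases i with a | a
    · rw [sE_apply_inl]
      split_ifs with ha
      · exact h a ha
      · exact Nat.zero_le _
    · rw [sE_apply_inr]
      exact Nat.zero_le _

/-- The relation exponents `X_j Y_j`. -/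
def RelG : Finset ((T ⊕ T) →₀ ℕ) := Finset.univ.image fun j : T => xe j + ye j

/-- Generators of the ideal generated by `{X_j : j ∈ A} ∪ {Y_j : j ∉ B}`. -/
def genF (A B : Finset T) : Finset ((T ⊕ T) →₀ ℕ) := A.image xe ∪ Bᶜ.image ye

theorem good_genF {A B : Finset T} {e : (T ⊕ T) →₀ ℕ} :
    (∃ d ∈ genF A B ∪ RelG, d ≤ e) ↔
      (∃ j ∈ A, 1 ≤ e (Sum.inl j)) ∨ (∃ j ∉ B, 1 ≤ e (Sum.inr j)) ∨
        ∃ j : T, 1 ≤ e (Sum.inl j) ∧ 1 ≤ e (Sum.inr j) := by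
  constructor
  · rintro ⟨d, hd, hle⟩
    rcases Finset.mem_union.mp hd with hd | hd
    · rcases Finset.mem_union.mp hd with hd | hd
      · obtain ⟨j, hj, rfl⟩ := Finset.mem_image.mp hd
        exact Or.inl ⟨j, hj, xe_le_iff.mp hle⟩
      · obtain ⟨j, hj, rfl⟩ := Finset.mem_image.mp hd
        exact Or.inr (Or.inl ⟨j, Finset.mem_compl.mp hj, ye_le_iff.mp hle⟩)
    · obtain ⟨j, _, rfl⟩ := Finset.mem_image.mp hd
      exact Or.inr (Or.inr ⟨j, xye_le_iff.mp hle⟩)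
  · rintro (⟨j, hj, h1⟩ | ⟨j, hj, h1⟩ | ⟨j, h1, h2⟩)
    · exact ⟨xe j, Finset.mem_union_left _
        (Finset.mem_union_left _ (Finset.mem_image_of_mem _ hj)), xe_le_iff.mpr h1⟩
    · exact ⟨ye j, Finset.mem_union_left _
        (Finset.mem_union_right _ (Finset.mem_image_of_mem _ (Finset.mem_compl.mpr hj))),
        ye_le_iff.mpr h1⟩
    · exact ⟨xe j + ye j, Finset.mem_union_right _
        (Finset.mem_image_of_mem _ (Finset.mem_univ j)), xye_le_iff.mpr ⟨h1, h2⟩⟩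

end S18aux

namespace S18aux

variable {T : Type} [Fintype T] [DecidableEq T]
variable {J₁ J₂ : Finset T} (h12 : J₁ ⊆ J₂) {e : (T ⊕ T) →₀ ℕ}

theorem comb1 (h12 : J₁ ⊆ J₂) (e : (T ⊕ T) →₀ ℕ) :
    (∀ J : Finset T, J₁ ⊆ J → J ⊆ J₂ → ∃ d ∈ genF J J ∪ RelG, d ≤ e) ↔
      ∃ d ∈ genF J₁ J₂ ∪ RelG, d ≤ e := by
  constructor
  · intro H
    by_contra hn
    rw [good_genF] at hn
    push_neg at hn
    obtain ⟨ha, hb, hc⟩ := hn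
    set J : Finset T := J₁ ∪ J₂.filter (fun i => 1 ≤ e (Sum.inr i)) with hJ
    have hJ1 : J₁ ⊆ J := Finset.subset_union_left
    have hJ2 : J ⊆ J₂ := Finset.union_subset h12 (Finset.filter_subset _ _)
    rcases good_genF.mp (H J hJ1 hJ2) with ⟨j, hj, h1⟩ | ⟨j, hj, h1⟩ | ⟨j, h1, h2⟩
    · rcases Finset.mem_union.mp hj with hj | hj
      · exact absurd h1 (by simpa using ha j hj)
      · obtain ⟨-, h2⟩ := Finset.mem_filter.mp hj
        exact absurd h2 (not_le.mpr (hc j h1))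
    · by_cases hj2 : j ∈ J₂
      · exact hj (Finset.mem_union_right _ (Finset.mem_filter.mpr ⟨hj2, h1⟩))
      · exact absurd h1 (by simpa using hb j hj2)
    · exact absurd h2 (not_le.mpr (hc j h1))
  · intro h J hJ1 hJ2
    rcases good_genF.mp h with ⟨j, hj, h1⟩ | ⟨j, hj, h1⟩ | ⟨j, h1, h2⟩
    · exact good_genF.mpr (Or.inl ⟨j, hJ1 hj, h1⟩)
    · exact good_genF.mpr (Or.inr (Or.inl ⟨j, fun hc => hj (hJ2 hc), h1⟩))
    · exact good_genF.mpr (Or.inr (Or.inr ⟨j, h1, h2⟩))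

theorem comb2 (h12 : J₁ ⊆ J₂) (e : (T ⊕ T) →₀ ℕ) :
    (∀ J : Finset T, J₁ ⊆ J → J ⊆ J₂ → J ≠ J₁ → ∃ d ∈ genF J J ∪ RelG, d ≤ e) ↔
      (∃ d ∈ (genF J₁ J₂ ∪ {sE (J₂ \ J₁)}) ∪ RelG, d ≤ e) := by
  have hsplit : ∀ d, d ∈ (genF J₁ J₂ ∪ {sE (J₂ \ J₁)}) ∪ RelG ↔
      d ∈ genF J₁ J₂ ∪ RelG ∨ d = sE (J₂ \ J₁) := by
    intro d
    simp only [Finset.mem_union, Finset.mem_singleton]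
    tauto
  constructor
  · intro H
    by_contra hn
    push_neg at hn
    have hng : ¬∃ d ∈ genF J₁ J₂ ∪ RelG, d ≤ e := by
      rintro ⟨d, hd, hde⟩
      exact hn d ((hsplit d).mpr (Or.inl hd)) hde
    have hns : ¬sE (J₂ \ J₁) ≤ e := hn _ ((hsplit _).mpr (Or.inr rfl))
    rw [good_genF] at hng
    push_neg at hng
    obtain ⟨ha, hb, hc⟩ := hng
    rw [sE_le_iff] at hns
    push_neg at hns
    obtain ⟨i₀, hi₀, hi₀e⟩ := hns
    by_cases hcase : ∃ i ∈ J₂ \ J₁, 1 ≤ e (Sum.inr i)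
    · obtain ⟨i, hi, hie⟩ := hcase
      set J : Finset T := J₁ ∪ (J₂ \ J₁).filter (fun k => 1 ≤ e (Sum.inr k)) with hJ
      have hJ1 : J₁ ⊆ J := Finset.subset_union_left
      have hJ2 : J ⊆ J₂ := Finset.union_subset h12
        ((Finset.filter_subset _ _).trans Finset.sdiff_subset)
      have hJne : J ≠ J₁ := by
        intro hE
        have : i ∈ J := Finset.mem_union_right _ (Finset.mem_filter.mpr ⟨hi, hie⟩)
        rw [hE] at this
        exact (Finset.mem_sdiff.mp hi).2 this
      rcases good_genF.mp (H J hJ1 hJ2 hJne) with ⟨j, hj, h1⟩ | ⟨j, hj, h1⟩ | ⟨j, h1, h2⟩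
      · rcases Finset.mem_union.mp hj with hj | hj
        · exact absurd h1 (by simpa using ha j hj)
        · obtain ⟨-, h2⟩ := Finset.mem_filter.mp hj
          exact absurd h2 (not_le.mpr (hc j h1))
      · by_cases hj2 : j ∈ J₂
        · by_cases hj1 : j ∈ J₁
          · exact hj (hJ1 hj1)
          · exact hj (Finset.mem_union_right _
              (Finset.mem_filter.mpr ⟨Finset.mem_sdiff.mpr ⟨hj2, hj1⟩, h1⟩))
        · exact absurd h1 (by simpa using hb j hj2)
      · exact absurd h2 (not_le.mpr (hc j h1))
    · push_neg at hcase
      set J : Finset T := insert i₀ J₁ with hJ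
      have hi₀2 : i₀ ∈ J₂ := (Finset.mem_sdiff.mp hi₀).1
      have hi₀1 : i₀ ∉ J₁ := (Finset.mem_sdiff.mp hi₀).2
      have hJ1 : J₁ ⊆ J := Finset.subset_insert _ _
      have hJ2 : J ⊆ J₂ := Finset.insert_subset hi₀2 h12
      have hJne : J ≠ J₁ := by
        intro hE
        exact hi₀1 (hE ▸ Finset.mem_insert_self i₀ J₁)
      rcases good_genF.mp (H J hJ1 hJ2 hJne) with ⟨j, hj, h1⟩ | ⟨j, hj, h1⟩ | ⟨j, h1, h2⟩
      · rcases Finset.mem_insert.mp hj with rfl | hj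
        · omega
        · exact absurd h1 (by simpa using ha j hj)
      · by_cases hj2 : j ∈ J₂
        · have hj1 : j ∉ J₁ := fun hc' => hj (Finset.mem_insert_of_mem hc')
          exact absurd h1 (by simpa using hcase j (Finset.mem_sdiff.mpr ⟨hj2, hj1⟩))
        · exact absurd h1 (by simpa using hb j hj2)
      · exact absurd h2 (not_le.mpr (hc j h1))
  · intro h J hJ1 hJ2 hJne
    obtain ⟨d, hd, hde⟩ := h
    rcases (hsplit d).mp hd with hd' | rfl
    · rcases good_genF.mp ⟨d, hd', hde⟩ with ⟨j, hj, h1⟩ | ⟨j, hj, h1⟩ | ⟨j, h1, h2⟩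
      · exact good_genF.mpr (Or.inl ⟨j, hJ1 hj, h1⟩)
      · exact good_genF.mpr (Or.inr (Or.inl ⟨j, fun hc => hj (hJ2 hc), h1⟩))
      · exact good_genF.mpr (Or.inr (Or.inr ⟨j, h1, h2⟩))
    · obtain ⟨i, hiJ, hi1⟩ : ∃ i ∈ J, i ∉ J₁ := by
        by_contra hc
        push_neg at hc
        exact hJne (Finset.Subset.antisymm hc hJ1)
      refine good_genF.mpr (Or.inl ⟨i, hiJ, ?_⟩)
      exact sE_le_iff.mp hde i (Finset.mem_sdiff.mpr ⟨hJ2 hiJ, hi1⟩)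

theorem comb3 (h12 : J₁ ⊆ J₂) (e : (T ⊕ T) →₀ ℕ) :
    (∃ d ∈ genF J₁ J₂ ∪ RelG, d ≤ e + sE (J₂ \ J₁)) ↔
      ∃ d ∈ genF J₁ J₁ ∪ RelG, d ≤ e := by
  have hinl : ∀ j, (e + sE (J₂ \ J₁)) (Sum.inl j) =
      e (Sum.inl j) + if j ∈ J₂ \ J₁ then 1 else 0 := by
    intro j; rw [Finsupp.add_apply, sE_apply_inl]
  have hinr : ∀ j, (e + sE (J₂ \ J₁)) (Sum.inr j) = e (Sum.inr j) := by
    intro j; rw [Finsupp.add_apply, sE_apply_inr, add_zero]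
  rw [good_genF, good_genF]
  constructor
  · rintro (⟨j, hj, h1⟩ | ⟨j, hj, h1⟩ | ⟨j, h1, h2⟩)
    · refine Or.inl ⟨j, hj, ?_⟩
      rw [hinl, if_neg (fun hc => (Finset.mem_sdiff.mp hc).2 hj)] at h1
      simpa using h1
    · refine Or.inr (Or.inl ⟨j, fun hc => hj (h12 hc), ?_⟩)
      rwa [hinr] at h1
    · rw [hinr] at h2
      by_cases hj1 : j ∈ J₁
      · rw [hinl, if_neg (fun hc => (Finset.mem_sdiff.mp hc).2 hj1)] at h1
        exact Or.inr (Or.inr ⟨j, by simpa using h1, h2⟩)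
      · exact Or.inr (Or.inl ⟨j, hj1, h2⟩)
  · rintro (⟨j, hj, h1⟩ | ⟨j, hj, h1⟩ | ⟨j, h1, h2⟩)
    · exact Or.inl ⟨j, hj, by rw [hinl]; omega⟩
    · by_cases hj2 : j ∈ J₂
      · refine Or.inr (Or.inr ⟨j, ?_, by rwa [hinr]⟩)
        rw [hinl, if_pos (Finset.mem_sdiff.mpr ⟨hj2, hj⟩)]
        omega
      · exact Or.inr (Or.inl ⟨j, hj2, by rwa [hinr]⟩)
    · exact Or.inr (Or.inr ⟨j, by rw [hinl]; omega, by rwa [hinr]⟩)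

end S18aux
namespace Stmt1819

variable (κ : Type) [Field κ] (T : Type) [Fintype T] [DecidableEq T] (m : ℕ)

/-- `κ⟦(X_j, Y_j)_{j ∈ T}⟧`, a power series ring with two families of variables `X_j, Y_j`. -/
abbrev Base : Type := MvPowerSeries (T ⊕ T) κ

/-- The ideal generated by the relations `X_j · Y_j`, `j ∈ T`. -/
def Rel : Ideal (Base κ T) :=
  Ideal.span (Set.range fun j : T =>
    (MvPowerSeries.X (Sum.inl j) * MvPowerSeries.X (Sum.inr j) : Base κ T))

/-- The ring `κ⟦(X_j, Y_j)_{j∈T}⟧/(X_j Y_j)_{j∈T}`. -/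
abbrev BRing : Type := Base κ T ⧸ Rel κ T

/-- The ring `R`: a formal power series ring in `m` further variables over
`κ⟦(X_j, Y_j)_{j∈T}⟧/(X_j Y_j)_{j∈T}`. -/
abbrev RRing : Type := MvPowerSeries (Fin m) (BRing κ T)

/-- The variable `X_j`, viewed in `R`. -/
def xvar (j : T) : RRing κ T m :=
  MvPowerSeries.C (σ := Fin m) (R := BRing κ T) (Ideal.Quotient.mk (Rel κ T) (MvPowerSeries.X (Sum.inl j)))

/-- The variable `Y_j`, viewed in `R`. -/
def yvar (j : T) : RRing κ T m :=
  MvPowerSeries.C (σ := Fin m) (R := BRing κ T) (Ideal.Quotient.mk (Rel κ T) (MvPowerSeries.X (Sum.inr j)))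

/-- The ideal `P_J` of `R`, generated by `{X_j : j ∈ J} ∪ {Y_j : j ∈ T \ J}`. -/
def Pideal (J : Finset T) : Ideal (RRing κ T m) :=
  Ideal.span ((xvar κ T m '' (J : Set T)) ∪ (yvar κ T m '' ((Jᶜ : Finset T) : Set T)))

/-- The ideal `I_𝒥 = ⋂_{J ∈ 𝒥} P_J` (with `I_∅ = R`, the unit ideal). -/
def Icoll (𝒥 : Set (Finset T)) : Ideal (RRing κ T m) := ⨅ J ∈ 𝒥, Pideal κ T m J

/-- The interval `ℱ(J₁, J₂) = {J : J₁ ⊆ J ⊆ J₂}`. -/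
def Fint (J₁ J₂ : Finset T) : Set (Finset T) := {J | J₁ ⊆ J ∧ J ⊆ J₂}

/-- The punctured interval `ℱ(J₁, J₂)^× = ℱ(J₁, J₂) \ {J₁}`. -/
def FintX (J₁ J₂ : Finset T) : Set (Finset T) := Fint T J₁ J₂ \ {J₁}

end Stmt1819
namespace S18aux
open Stmt1819 MvPowerSeries

variable (κ : Type) [Field κ] (T : Type) [Fintype T] [DecidableEq T] (m : ℕ)

/-- The quotient map `Base → BRing`. -/
abbrev bmk : Base κ T →+* BRing κ T := Ideal.Quotient.mk (Rel κ T)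

/-- The image of the monomial `d` in `B`. -/
def bgen (d : (T ⊕ T) →₀ ℕ) : BRing κ T := bmk κ T (monomial (R := κ) d 1)

/-- Interpret a coefficient function as an element of `R`. -/
def toMv (g : (Fin m →₀ ℕ) → BRing κ T) : RRing κ T m := g

theorem coeff_toMv (g : (Fin m →₀ ℕ) → BRing κ T) (n : Fin m →₀ ℕ) :
    MvPowerSeries.coeff (R := (BRing κ T)) n (toMv κ T m g) = g n := rfl

/-- The image of the monomial `d` in `R`. -/
def gen (d : (T ⊕ T) →₀ ℕ) : RRing κ T m :=
  MvPowerSeries.C (σ := Fin m) (R := BRing κ T) (bgen κ T d)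

/-- The ideal of `R` generated by the (images of) monomials with exponents in `D`. -/
def RIdeal (D : Finset ((T ⊕ T) →₀ ℕ)) : Ideal (RRing κ T m) :=
  Ideal.span (gen κ T m '' (D : Set ((T ⊕ T) →₀ ℕ)))

/-- The ideal of `B` generated by the (images of) monomials with exponents in `D`. -/
def BIdeal (D : Finset ((T ⊕ T) →₀ ℕ)) : Ideal (BRing κ T) :=
  Ideal.map (bmk κ T) (monIdeal D)

theorem Rel_eq : Stmt1819.Rel κ T = (monIdeal (RelG : Finset ((T ⊕ T) →₀ ℕ)) : Ideal (Base κ T)) := by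
  rw [Stmt1819.Rel, monIdeal]
  congr 1
  rw [RelG, Finset.coe_image, Finset.coe_univ, Set.image_image, ← Set.image_univ]
  apply Set.image_congr
  intro j _
  show MvPowerSeries.X (Sum.inl j) * MvPowerSeries.X (Sum.inr j) = _
  rw [MvPowerSeries.X, MvPowerSeries.X, monomial_mul_monomial, one_mul]
  rfl

theorem mem_BIdeal_iff (D : Finset ((T ⊕ T) →₀ ℕ)) (a : Base κ T) :
    bmk κ T a ∈ BIdeal κ T D ↔ a ∈ (monIdeal (D ∪ RelG) : Ideal (Base κ T)) := by
  rw [BIdeal, Ideal.mem_quotient_iff_mem_sup, Rel_eq]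
  rw [monIdeal, monIdeal, monIdeal, ← Ideal.span_union, Finset.coe_union, Set.image_union]

theorem mem_BIdeal_iff' (D : Finset ((T ⊕ T) →₀ ℕ)) (a : Base κ T) :
    bmk κ T a ∈ BIdeal κ T D ↔ ∀ e, coeff (R := κ) e a ≠ 0 → ∃ d ∈ D ∪ RelG, d ≤ e := by
  rw [mem_BIdeal_iff, mem_monIdeal]

theorem BIdeal_eq_span (D : Finset ((T ⊕ T) →₀ ℕ)) :
    BIdeal κ T D = Ideal.span (bgen κ T '' (D : Set ((T ⊕ T) →₀ ℕ))) := by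
  rw [BIdeal, monIdeal, Ideal.map_span, Set.image_image]
  rfl

theorem mem_RIdeal_iff (D : Finset ((T ⊕ T) →₀ ℕ)) (f : RRing κ T m) :
    f ∈ RIdeal κ T m D ↔ ∀ n, coeff (R := (BRing κ T)) n f ∈ BIdeal κ T D := by
  classical
  constructor
  · intro hf
    refine Submodule.span_induction ?_ ?_ ?_ ?_ hf
    · rintro x ⟨d, hd, rfl⟩ n
      rw [gen, coeff_C]
      split_ifs with h
      · rw [BIdeal_eq_span]
        exact Ideal.subset_span ⟨d, hd, rfl⟩
      · exact zero_mem _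
    · intro n; simp only [map_zero]; exact zero_mem _
    · intro x y _ _ hx hy n
      rw [map_add]; exact add_mem (hx n) (hy n)
    · intro r x _ hx n
      rw [smul_eq_mul, coeff_mul]
      exact Ideal.sum_mem _ fun p _ => Ideal.mul_mem_left _ _ (hx p.2)
  · intro hf
    -- decompose f as a combination of the generators
    have h1 : ∀ n, coeff (R := (BRing κ T)) n f ∈
        Submodule.span (BRing κ T) ((D.image (bgen κ T) : Finset (BRing κ T)) : Set (BRing κ T)) := by
      intro n
      have := hf n
      rwa [BIdeal_eq_span, Ideal.span, ← Finset.coe_image] at this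
    choose c _ hc using fun n => Submodule.mem_span_finset.mp (h1 n)
    have hsum : f = ∑ b ∈ D.image (bgen κ T),
        (toMv κ T m (fun n => c n b) * MvPowerSeries.C (σ := Fin m) (R := BRing κ T) b) := by
      ext n
      rw [map_sum]
      have : ∀ b ∈ D.image (bgen κ T),
          coeff (R := (BRing κ T)) n (toMv κ T m (fun n' => c n' b) *
            MvPowerSeries.C (σ := Fin m) (R := BRing κ T) b) = c n b * b := by
        intro b _
        rw [coeff_mul_C, coeff_toMv]
      rw [Finset.sum_congr rfl this]
      exact (hc n).symm
    rw [hsum]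
    refine Ideal.sum_mem _ ?_
    intro b hb
    obtain ⟨d, hd, rfl⟩ := Finset.mem_image.mp hb
    exact Ideal.mul_mem_left _ _ (Ideal.subset_span ⟨d, hd, rfl⟩)


theorem xvar_eq (j : T) : xvar κ T m j = gen κ T m (xe j) := by
  rw [xvar, gen, bgen, xe, MvPowerSeries.X]

theorem yvar_eq (j : T) : yvar κ T m j = gen κ T m (ye j) := by
  rw [yvar, gen, bgen, ye, MvPowerSeries.X]

theorem span_vars_eq (A B : Finset T) :
    Ideal.span ((xvar κ T m '' (A : Set T)) ∪ (yvar κ T m '' ((Bᶜ : Finset T) : Set T))) =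
      RIdeal κ T m (genF A B) := by
  rw [RIdeal, genF]
  congr 1
  rw [Finset.coe_union, Set.image_union, Finset.coe_image, Finset.coe_image,
    Set.image_image, Set.image_image]
  simp only [← xvar_eq κ T m, ← yvar_eq κ T m]

theorem Pideal_eq (J : Finset T) : Pideal κ T m J = RIdeal κ T m (genF J J) :=
  span_vars_eq κ T m J J

theorem mem_Icoll (𝒥 : Set (Finset T)) (f : RRing κ T m) :
    f ∈ Icoll κ T m 𝒥 ↔ ∀ J ∈ 𝒥, f ∈ Pideal κ T m J := by
  rw [Icoll]
  simp only [Ideal.mem_iInf]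

theorem Icoll_eq (𝒥 : Set (Finset T)) (D₀ : Finset ((T ⊕ T) →₀ ℕ))
    (hcomb : ∀ e, (∀ J ∈ 𝒥, ∃ d ∈ genF J J ∪ RelG, d ≤ e) ↔ ∃ d ∈ D₀ ∪ RelG, d ≤ e) :
    Icoll κ T m 𝒥 = RIdeal κ T m D₀ := by
  ext f
  rw [mem_Icoll, mem_RIdeal_iff]
  constructor
  · intro h n
    obtain ⟨a, ha⟩ := Ideal.Quotient.mk_surjective (coeff (R := (BRing κ T)) n f)
    rw [← ha, mem_BIdeal_iff']
    intro e he
    rw [← hcomb e]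
    intro J hJ
    have hm := (mem_RIdeal_iff κ T m (genF J J) f).mp
      (by rw [← Pideal_eq]; exact h J hJ) n
    rw [← ha, mem_BIdeal_iff'] at hm
    exact hm e he
  · intro h J hJ
    rw [Pideal_eq, mem_RIdeal_iff]
    intro n
    obtain ⟨a, ha⟩ := Ideal.Quotient.mk_surjective (coeff (R := (BRing κ T)) n f)
    have hm := h n
    rw [← ha, mem_BIdeal_iff'] at hm ⊢
    intro e he
    exact ((hcomb e).mpr (hm e he)) J hJ

theorem gen_prod (S : Finset T) :
    ∏ j ∈ S, gen κ T m (xe j) = gen κ T m (sE S) := by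
  rw [gen, bgen, sE, ← _root_.prod_monomial, map_prod, map_prod]
  rfl

theorem prod_xvar (S : Finset T) :
    ∏ j ∈ S, xvar κ T m j = gen κ T m (sE S) := by
  rw [← gen_prod]
  exact Finset.prod_congr rfl fun j _ => xvar_eq κ T m j

theorem RIdeal_union (D D' : Finset ((T ⊕ T) →₀ ℕ)) :
    RIdeal κ T m (D ∪ D') = RIdeal κ T m D + RIdeal κ T m D' := by
  rw [RIdeal, RIdeal, RIdeal, Finset.coe_union, Set.image_union, Ideal.span_union,
    Submodule.add_eq_sup]

theorem RIdeal_singleton (d : (T ⊕ T) →₀ ℕ) :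
    RIdeal κ T m {d} = Ideal.span {gen κ T m d} := by
  rw [RIdeal, Finset.coe_singleton, Set.image_singleton]

theorem colon_iff {J₁ J₂ : Finset T} (h12 : J₁ ⊆ J₂) (r : RRing κ T m) :
    r * gen κ T m (sE (J₂ \ J₁)) ∈ RIdeal κ T m (genF J₁ J₂) ↔
      r ∈ RIdeal κ T m (genF J₁ J₁) := by
  rw [mem_RIdeal_iff, mem_RIdeal_iff]
  refine forall_congr' fun n => ?_
  obtain ⟨a, ha⟩ := Ideal.Quotient.mk_surjective (coeff (R := (BRing κ T)) n r)
  have h1 : coeff (R := (BRing κ T)) n (r * gen κ T m (sE (J₂ \ J₁))) =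
      bmk κ T (a * monomial (R := κ) (sE (J₂ \ J₁)) 1) := by
    rw [gen, coeff_mul_C, ← ha, bgen, map_mul]
  rw [h1, ← ha, mem_BIdeal_iff, mem_BIdeal_iff, mul_monomial_mem_monIdeal_iff,
    mem_monIdeal]
  exact forall_congr' fun e => imp_congr_right fun _ => comb3 h12 e

end S18aux

open Stmt1819 S18aux in
set_option maxHeartbeats 2000000 in
/-- For `J₁ ⊆ J₂ ⊆ T`:
(1) `I_{ℱ(J₁,J₂)}` is generated by `{X_j : j ∈ J₁} ∪ {Y_j : j ∈ T∖J₂}`;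
(2) `I_{ℱ(J₁,J₂)^×} = I_{ℱ(J₁,J₂)} + (∏_{j ∈ J₂∖J₁} X_j)`;
(3) the `R`-module `I_{ℱ(J₁,J₂)^×}/I_{ℱ(J₁,J₂)}` (realized as the image of `I_{ℱ(J₁,J₂)^×}`
in `R/I_{ℱ(J₁,J₂)}`) is cyclic, generated by the image of `∏_{j∈J₂∖J₁} X_j`, its annihilator
is `P_{J₁}`, and it is isomorphic to `R/P_{J₁}` as an `R`-module. -/
theorem statement18 (κ : Type) [Field κ] (T : Type) [Fintype T] [DecidableEq T] (m : ℕ)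
    (J₁ J₂ : Finset T) (h12 : J₁ ⊆ J₂) :
    Icoll κ T m (Fint T J₁ J₂) =
      Ideal.span ((xvar κ T m '' (J₁ : Set T)) ∪ (yvar κ T m '' ((J₂ᶜ : Finset T) : Set T))) ∧
    Icoll κ T m (FintX T J₁ J₂) =
      Icoll κ T m (Fint T J₁ J₂) + Ideal.span {∏ j ∈ J₂ \ J₁, xvar κ T m j} ∧
    Submodule.map (Icoll κ T m (Fint T J₁ J₂)).mkQ (Icoll κ T m (FintX T J₁ J₂)) =
      Submodule.span (RRing κ T m)
        {(Icoll κ T m (Fint T J₁ J₂)).mkQ (∏ j ∈ J₂ \ J₁, xvar κ T m j)} ∧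
    Module.annihilator (RRing κ T m)
        ↥(Submodule.map (Icoll κ T m (Fint T J₁ J₂)).mkQ (Icoll κ T m (FintX T J₁ J₂))) =
      Pideal κ T m J₁ ∧
    Nonempty (↥(Submodule.map (Icoll κ T m (Fint T J₁ J₂)).mkQ (Icoll κ T m (FintX T J₁ J₂)))
      ≃ₗ[RRing κ T m] (RRing κ T m ⧸ Pideal κ T m J₁)) := by
  classical
  have hcomb1 : ∀ e, (∀ J ∈ Fint T J₁ J₂, ∃ d ∈ genF J J ∪ RelG, d ≤ e) ↔
      ∃ d ∈ genF J₁ J₂ ∪ RelG, d ≤ e := by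
    intro e
    rw [← comb1 h12 e]
    constructor
    · intro h J hJ1 hJ2; exact h J ⟨hJ1, hJ2⟩
    · intro h J hJ; exact h J hJ.1 hJ.2
  have p1 : Icoll κ T m (Fint T J₁ J₂) = RIdeal κ T m (genF J₁ J₂) :=
    Icoll_eq κ T m _ _ hcomb1
  have p1' : Icoll κ T m (Fint T J₁ J₂) =
      Ideal.span ((xvar κ T m '' (J₁ : Set T)) ∪ (yvar κ T m '' ((J₂ᶜ : Finset T) : Set T))) := by
    rw [p1, span_vars_eq]
  have hprod : (∏ j ∈ J₂ \ J₁, xvar κ T m j) = gen κ T m (sE (J₂ \ J₁)) := prod_xvar κ T m _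
  have hcomb2 : ∀ e, (∀ J ∈ FintX T J₁ J₂, ∃ d ∈ genF J J ∪ RelG, d ≤ e) ↔
      ∃ d ∈ (genF J₁ J₂ ∪ {sE (J₂ \ J₁)}) ∪ RelG, d ≤ e := by
    intro e
    rw [← comb2 h12 e]
    constructor
    · intro h J hJ1 hJ2 hne; exact h J ⟨⟨hJ1, hJ2⟩, hne⟩
    · intro h J hJ; exact h J hJ.1.1 hJ.1.2 hJ.2
  have p2 : Icoll κ T m (FintX T J₁ J₂) = RIdeal κ T m (genF J₁ J₂ ∪ {sE (J₂ \ J₁)}) :=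
    Icoll_eq κ T m _ _ hcomb2
  have p2' : Icoll κ T m (FintX T J₁ J₂) =
      Icoll κ T m (Fint T J₁ J₂) + Ideal.span {∏ j ∈ J₂ \ J₁, xvar κ T m j} := by
    rw [p2, RIdeal_union, p1, RIdeal_singleton, hprod]
  have hmapbot : Submodule.map (Icoll κ T m (Fint T J₁ J₂)).mkQ
      (Icoll κ T m (Fint T J₁ J₂) : Submodule (RRing κ T m) (RRing κ T m)) = ⊥ := by
    rw [eq_bot_iff]
    rintro x ⟨y, hy, rfl⟩
    rw [Submodule.mem_bot, Submodule.mkQ_apply, Submodule.Quotient.mk_eq_zero]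
    exact hy
  have p3a : Submodule.map (Icoll κ T m (Fint T J₁ J₂)).mkQ (Icoll κ T m (FintX T J₁ J₂)) =
      Submodule.span (RRing κ T m)
        {(Icoll κ T m (Fint T J₁ J₂)).mkQ (∏ j ∈ J₂ \ J₁, xvar κ T m j)} := by
    rw [p2', Submodule.add_eq_sup, Submodule.map_sup, hmapbot, bot_sup_eq,
      ← Ideal.submodule_span_eq, Submodule.map_span, Set.image_singleton]
  have hsmul : ∀ r : RRing κ T m,
      r • (Icoll κ T m (Fint T J₁ J₂)).mkQ (∏ j ∈ J₂ \ J₁, xvar κ T m j) = 0 ↔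
        r ∈ Pideal κ T m J₁ := by
    intro r
    have h1 : r • (Icoll κ T m (Fint T J₁ J₂)).mkQ (∏ j ∈ J₂ \ J₁, xvar κ T m j) =
        (Icoll κ T m (Fint T J₁ J₂)).mkQ (r * ∏ j ∈ J₂ \ J₁, xvar κ T m j) := by
      rw [← map_smul, smul_eq_mul]
    rw [h1, Submodule.mkQ_apply, Submodule.Quotient.mk_eq_zero, p1, hprod,
      colon_iff κ T m h12 r, ← Pideal_eq]
  have p3b : Module.annihilator (RRing κ T m)
      ↥(Submodule.map (Icoll κ T m (Fint T J₁ J₂)).mkQ (Icoll κ T m (FintX T J₁ J₂))) =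
        Pideal κ T m J₁ := by
    have hann := congrArg
      (fun p : Submodule (RRing κ T m) (RRing κ T m ⧸ Icoll κ T m (Fint T J₁ J₂)) =>
        Module.annihilator (RRing κ T m) ↥p) p3a
    refine hann.trans ?_
    ext r
    exact Iff.trans (Submodule.mem_annihilator_span_singleton _ r) (hsmul r)
  have htor : Ideal.torsionOf (RRing κ T m) (RRing κ T m ⧸ Icoll κ T m (Fint T J₁ J₂))
      ((Icoll κ T m (Fint T J₁ J₂)).mkQ (∏ j ∈ J₂ \ J₁, xvar κ T m j)) = Pideal κ T m J₁ := by
    ext r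
    rw [Ideal.mem_torsionOf_iff]
    exact hsmul r
  exact ⟨p1', p2', p3a, p3b,
    ⟨(LinearEquiv.ofEq _ _ p3a).trans
      ((Ideal.quotTorsionOfEquivSpanSingleton (RRing κ T m) _ _).symm.trans
        (Submodule.quotEquivOfEq _ _ htor))⟩⟩
end
end

section
/- If 𝒥_1 and 𝒥_2 are two capped intervals of subsets of T that share a common cap, then I_{𝒥_1} + I_{𝒥_2} = I_{𝒥_1 ∩ 𝒥_2}. -/
noncomputable section

namespace Stmt1819Aux

open MvPowerSeries

variable {σ : Type*} {K : Type*} [CommRing K]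

/-- The ideal of power series all of whose coefficients lie in `b`. -/
def coeffIdeal (σ : Type*) {K : Type*} [CommRing K] (b : Ideal K) :
    Ideal (MvPowerSeries σ K) where
  carrier := {f | ∀ d, coeff (R := K) d f ∈ b}
  add_mem' := fun hf hg d => by rw [map_add]; exact b.add_mem (hf d) (hg d)
  zero_mem' := fun d => by rw [map_zero]; exact b.zero_mem
  smul_mem' := fun c f hf => by
    intro d
    classical
    rw [smul_eq_mul, coeff_mul]
    exact Ideal.sum_mem b fun p _ => b.mul_mem_left _ (hf p.2)

lemma mem_coeffIdeal {b : Ideal K} {f : MvPowerSeries σ K} :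
    f ∈ coeffIdeal σ b ↔ ∀ d, coeff (R := K) d f ∈ b := Iff.rfl

lemma span_C_eq_coeffIdeal (σ : Type*) {K : Type*} [CommRing K] (G : Finset K) :
    Ideal.span ((MvPowerSeries.C (σ := σ) (R := K)) '' (G : Set K)) =
      coeffIdeal σ (Ideal.span (G : Set K)) := by
  classical
  apply le_antisymm
  · rw [Ideal.span_le]
    rintro _ ⟨g, hg, rfl⟩ d
    rw [coeff_C]
    split
    · exact Ideal.subset_span hg
    · exact zero_mem _
  · intro f hf
    have h : ∀ d : σ →₀ ℕ, ∃ c : K → K, ∑ g ∈ G, c g • g = coeff (R := K) d f := fun d =>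
      by obtain ⟨c, -, hc⟩ := Submodule.mem_span_finset.mp (hf d); exact ⟨c, hc⟩
    choose c hc using h
    let F : K → MvPowerSeries σ K := fun g d => c d g
    have key : f = ∑ g ∈ G, (MvPowerSeries.C (σ := σ) (R := K) g) * F g := by
      ext d
      rw [map_sum]
      rw [← hc d]
      refine Finset.sum_congr rfl fun g _ => ?_
      rw [coeff_C_mul, smul_eq_mul, mul_comm]
      rfl
    rw [key]
    exact Ideal.sum_mem _ fun g hg =>
      Ideal.mul_mem_right _ _ (Ideal.subset_span ⟨g, hg, rfl⟩)

lemma span_C_eq_coeffIdeal_of_finite (σ : Type*) {K : Type*} [CommRing K] (G : Set K)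
    (hG : G.Finite) :
    Ideal.span ((MvPowerSeries.C (σ := σ) (R := K)) '' G) = coeffIdeal σ (Ideal.span G) := by
  obtain ⟨F, rfl⟩ := hG.exists_finset_coe
  exact span_C_eq_coeffIdeal σ F

lemma mem_span_X_iff (S : Finset σ) (f : MvPowerSeries σ K) :
    f ∈ Ideal.span ((fun s => (X s : MvPowerSeries σ K)) '' (S : Set σ)) ↔
      ∀ d : σ →₀ ℕ, (∀ s ∈ S, d s = 0) → coeff (R := K) d f = 0 := by
  classical
  constructor
  · -- the vanishing set is an ideal containing the generators
    let V : Ideal (MvPowerSeries σ K) :=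
      { carrier := {f | ∀ d, (∀ s ∈ S, d s = 0) → coeff (R := K) d f = 0}
        add_mem' := fun hf hg d hd => by rw [map_add, hf d hd, hg d hd, add_zero]
        zero_mem' := fun d _ => map_zero _
        smul_mem' := fun c f hf => by
          intro d hd
          rw [smul_eq_mul, coeff_mul]
          refine Finset.sum_eq_zero fun p hp => ?_
          rw [hf p.2 fun s hs => by
            have h1 : p.1 + p.2 = d := Finset.HasAntidiagonal.mem_antidiagonal.mp hp
            have h2 : p.2 s ≤ d s := by rw [← h1]; simp
            have h3 := hd s hs
            omega, mul_zero] }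
    intro hf
    have hV : Ideal.span ((fun s => (X s : MvPowerSeries σ K)) '' (S : Set σ)) ≤ V := by
      rw [Ideal.span_le]
      rintro _ ⟨s, hs, rfl⟩ d hd
      rw [coeff_X]
      split
      · next h =>
        exfalso
        have : d s = 1 := by rw [h]; simp
        have := hd s hs
        omega
      · rfl
    exact hV hf
  · intro hf
    by_cases hK : (∀ d, coeff (R := K) d f = 0)
    · have : f = 0 := MvPowerSeries.ext fun d => by rw [hK d, map_zero]
      rw [this]; exact zero_mem _
    let sel : (σ →₀ ℕ) → Option σ := fun d =>
      if h : ∃ s ∈ S, d s ≠ 0 then some h.choose else none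
    have hsel_mem : ∀ d s, sel d = some s → s ∈ S ∧ d s ≠ 0 := by
      intro d s h
      simp only [sel] at h
      split at h
      · next hex =>
        obtain rfl : hex.choose = s := Option.some.inj h
        exact hex.choose_spec
      · exact absurd h (by simp)
    have hsel_some : ∀ d (h : ∃ s ∈ S, d s ≠ 0), sel d = some h.choose := by
      intro d h
      simp only [sel, dif_pos h]
    let g : σ → MvPowerSeries σ K := fun s =>
      (fun d' => if sel (d' + Finsupp.single s 1) = some s
        then coeff (R := K) (d' + Finsupp.single s 1) f else 0 : MvPowerSeries σ K)
    have hterm : ∀ (d : σ →₀ ℕ), ∀ s ∈ S, coeff (R := K) d ((X s : MvPowerSeries σ K) * g s)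
        = if sel d = some s then coeff (R := K) d f else 0 := by
      intro d s _
      rw [X_def, coeff_monomial_mul, one_mul]
      by_cases hle : Finsupp.single s 1 ≤ d
      · rw [if_pos hle]
        have hdd : d - Finsupp.single s 1 + Finsupp.single s 1 = d :=
          tsub_add_cancel_of_le hle
        show (if sel ((d - Finsupp.single s 1) + Finsupp.single s 1) = some s
          then coeff (R := K) ((d - Finsupp.single s 1) + Finsupp.single s 1) f else 0) = _
        rw [hdd]
      · rw [if_neg hle, if_neg]
        intro hsel
        exact hle (Finsupp.single_le_iff.mpr
          (Nat.one_le_iff_ne_zero.mpr (hsel_mem d s hsel).2))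
    have key : f = ∑ s ∈ S, (X s : MvPowerSeries σ K) * g s := by
      ext d
      rw [map_sum, Finset.sum_congr rfl (hterm d)]
      by_cases h : ∃ s ∈ S, d s ≠ 0
      · have hs0 := h.choose_spec
        rw [Finset.sum_eq_single_of_mem h.choose hs0.1]
        · rw [if_pos (hsel_some d h)]
        · intro b _ hb
          rw [if_neg]
          intro hbs
          have : h.choose = b := by
            have := hsel_some d h
            rw [this] at hbs
            exact Option.some.inj hbs
          exact hb this.symm
      · push_neg at h
        rw [hf d h]
        exact (Finset.sum_eq_zero fun s _ => ite_self 0).symm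
    rw [key]
    exact Ideal.sum_mem _ fun s hs =>
      Ideal.mul_mem_right _ _ (Ideal.subset_span ⟨s, hs, rfl⟩)

end Stmt1819Aux



namespace Stmt1819Aux2

open MvPowerSeries Stmt1819

variable (κ : Type) [Field κ] (T : Type) [Fintype T] [DecidableEq T] (m : ℕ)

/-- The set of variables generating `P_J` (at the level of `Base`). -/
def Vset (J : Finset T) : Finset (T ⊕ T) := J.image Sum.inl ∪ Jᶜ.image Sum.inr

/-- The ideal `q_J ⊆ Base` generated by the variables in `Vset J`. -/
def qIdeal (J : Finset T) : Ideal (Base κ T) :=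
  Ideal.span ((fun s => (MvPowerSeries.X s : Base κ T)) '' ((Vset T J : Set (T ⊕ T))))

lemma rel_le (J : Finset T) : Stmt1819.Rel κ T ≤ qIdeal κ T J := by
  rw [Stmt1819.Rel, Ideal.span_le]
  rintro _ ⟨j, rfl⟩
  by_cases hj : j ∈ J
  · exact Ideal.mul_mem_right _ _
      (Ideal.subset_span ⟨Sum.inl j, by simp [Vset, hj], rfl⟩)
  · exact Ideal.mul_mem_left _ _
      (Ideal.subset_span ⟨Sum.inr j, by simp [Vset, hj], rfl⟩)

lemma mem_qIdeal_iff (J : Finset T) (f : Base κ T) :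
    f ∈ qIdeal κ T J ↔
      ∀ d : (T ⊕ T) →₀ ℕ, (∀ s ∈ Vset T J, d s = 0) → MvPowerSeries.coeff (R := κ) d f = 0 :=
  Stmt1819Aux.mem_span_X_iff _ _

lemma pideal_gen (J : Finset T) :
    (xvar κ T m '' (J : Set T)) ∪ (yvar κ T m '' ((Jᶜ : Finset T) : Set T))
      = (MvPowerSeries.C (σ := Fin m) (R := BRing κ T)) ''
          ((fun s => Ideal.Quotient.mk (Stmt1819.Rel κ T) (MvPowerSeries.X s)) ''
            ((Vset T J : Set (T ⊕ T)))) := by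
  rw [Vset]
  simp only [Finset.coe_union, Finset.coe_image, Set.image_union, Set.image_image,
    xvar, yvar]
  rfl

lemma span_image_eq (J : Finset T) :
    Ideal.span ((fun s => Ideal.Quotient.mk (Stmt1819.Rel κ T) (MvPowerSeries.X s)) ''
        ((Vset T J : Set (T ⊕ T))))
      = (qIdeal κ T J).map (Ideal.Quotient.mk (Stmt1819.Rel κ T)) := by
  rw [qIdeal, Ideal.map_span, Set.image_image]

lemma pideal_eq (J : Finset T) :
    Pideal κ T m J
      = Stmt1819Aux.coeffIdeal (Fin m) ((qIdeal κ T J).map (Ideal.Quotient.mk (Stmt1819.Rel κ T))) := by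
  rw [Pideal, pideal_gen,
    Stmt1819Aux.span_C_eq_coeffIdeal_of_finite _ _ (((Vset T J).finite_toSet).image _),
    span_image_eq]

lemma mem_pideal_iff (J : Finset T) (f : RRing κ T m) :
    f ∈ Pideal κ T m J ↔ ∀ d : Fin m →₀ ℕ,
      MvPowerSeries.coeff (R := BRing κ T) d f ∈ (qIdeal κ T J).map (Ideal.Quotient.mk (Stmt1819.Rel κ T)) := by
  rw [pideal_eq]; rfl

/-- `Untouch d J` : the monomial `d` involves none of the variables of `Vset J`. -/
def Untouch (d : (T ⊕ T) →₀ ℕ) (J : Finset T) : Prop := ∀ s ∈ Vset T J, d s = 0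

lemma untouch_union {d : (T ⊕ T) →₀ ℕ} {J₁ J₂ : Finset T}
    (h₁ : Untouch T d J₁) (h₂ : Untouch T d J₂) : Untouch T d (J₁ ∪ J₂) := by
  intro s hs
  simp only [Vset, Finset.mem_union, Finset.mem_image, Finset.mem_compl] at hs
  rcases hs with ⟨j, hj, rfl⟩ | ⟨j, hj, rfl⟩
  · rcases hj with hj | hj
    · exact h₁ _ (by simp [Vset, hj])
    · exact h₂ _ (by simp [Vset, hj])
  · rw [not_or] at hj
    exact h₁ _ (by simp [Vset, hj.1])

end Stmt1819Aux2

open Stmt1819 in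
/-- If `𝒥₁` and `𝒥₂` are two capped intervals of subsets of `T` sharing a
common cap, then `I_{𝒥₁} + I_{𝒥₂} = I_{𝒥₁ ∩ 𝒥₂}`. -/
theorem statement19 (κ : Type) [Field κ] (T : Type) [Fintype T] [DecidableEq T] (m : ℕ)
    (𝒥₁ 𝒥₂ : Set (Finset T)) (cap : Finset T)
    (h₁int : ∀ ⦃Ja Jb J' : Finset T⦄, Ja ∈ 𝒥₁ → Jb ∈ 𝒥₁ → Ja ⊆ J' → J' ⊆ Jb → J' ∈ 𝒥₁)
    (h₂int : ∀ ⦃Ja Jb J' : Finset T⦄, Ja ∈ 𝒥₂ → Jb ∈ 𝒥₂ → Ja ⊆ J' → J' ⊆ Jb → J' ∈ 𝒥₂)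
    (h₁cap : cap ∈ 𝒥₁ ∧ ∀ J ∈ 𝒥₁, J ⊆ cap)
    (h₂cap : cap ∈ 𝒥₂ ∧ ∀ J ∈ 𝒥₂, J ⊆ cap) :
    Icoll κ T m 𝒥₁ + Icoll κ T m 𝒥₂ = Icoll κ T m (𝒥₁ ∩ 𝒥₂) := by
  classical
  open MvPowerSeries Stmt1819Aux Stmt1819Aux2 in
  rw [Submodule.add_eq_sup]
  have mono : ∀ (𝒥 𝒥' : Set (Finset T)), 𝒥' ⊆ 𝒥 → Icoll κ T m 𝒥 ≤ Icoll κ T m 𝒥' :=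
    fun 𝒥 𝒥' h => le_iInf₂ fun J hJ => iInf₂_le J (h hJ)
  apply le_antisymm
  · exact sup_le (mono _ _ Set.inter_subset_left) (mono _ _ Set.inter_subset_right)
  intro f hf
  set mkq := Ideal.Quotient.mk (Stmt1819.Rel κ T) with hmkq
  have hf' : ∀ J ∈ 𝒥₁ ∩ 𝒥₂, ∀ d : Fin m →₀ ℕ,
      MvPowerSeries.coeff (R := BRing κ T) d f ∈ (qIdeal κ T J).map mkq := by
    intro J hJ
    have : f ∈ Pideal κ T m J := by
      rw [Icoll] at hf
      exact ((Submodule.mem_iInf _).mp (((Submodule.mem_iInf _).mp hf) J)) hJ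
    exact (mem_pideal_iff κ T m J f).mp this
  -- choose representatives of the coefficients
  choose a ha using fun d : Fin m →₀ ℕ =>
    Ideal.Quotient.mk_surjective (I := Stmt1819.Rel κ T) (MvPowerSeries.coeff (R := BRing κ T) d f)
  have haq : ∀ J ∈ 𝒥₁ ∩ 𝒥₂, ∀ d, a d ∈ qIdeal κ T J := by
    intro J hJ d
    have := hf' J hJ d
    rw [← ha d] at this
    exact (Ideal.mem_quotient_iff_mem (rel_le κ T J)).mp this
  -- the splitting condition
  set cond : ((T ⊕ T) →₀ ℕ) → Prop := fun e => ∀ J ∈ 𝒥₁, ¬ Untouch T e J with hcond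
  set u : (Fin m →₀ ℕ) → Base κ T :=
    fun d => (fun e => if cond e then MvPowerSeries.coeff (R := κ) e (a d) else 0 : Base κ T) with hu
  set v : (Fin m →₀ ℕ) → Base κ T :=
    fun d => (fun e => if cond e then 0 else MvPowerSeries.coeff (R := κ) e (a d) : Base κ T) with hv
  have hcoeff_u : ∀ d e, MvPowerSeries.coeff (R := κ) e (u d)
      = if cond e then MvPowerSeries.coeff (R := κ) e (a d) else 0 := fun d e => rfl
  have hcoeff_v : ∀ d e, MvPowerSeries.coeff (R := κ) e (v d)
      = if cond e then 0 else MvPowerSeries.coeff (R := κ) e (a d) := fun d e => rfl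
  have huv : ∀ d, u d + v d = a d := by
    intro d
    ext e
    rw [map_add, hcoeff_u, hcoeff_v]
    by_cases h : cond e
    · rw [if_pos h, if_pos h, add_zero]
    · rw [if_neg h, if_neg h, zero_add]
  -- u d lies in every q_J for J ∈ 𝒥₁
  have hu_mem : ∀ J ∈ 𝒥₁, ∀ d, u d ∈ qIdeal κ T J := by
    intro J hJ d
    rw [mem_qIdeal_iff]
    intro e he
    rw [hcoeff_u, if_neg]
    intro hc
    exact hc J hJ he
  -- v d lies in every q_J for J ∈ 𝒥₂
  have hv_mem : ∀ J ∈ 𝒥₂, ∀ d, v d ∈ qIdeal κ T J := by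
    intro J hJ d
    rw [mem_qIdeal_iff]
    intro e he
    rw [hcoeff_v]
    by_cases h : cond e
    · rw [if_pos h]
    · rw [if_neg h]
      have h' : ¬ ∀ J ∈ 𝒥₁, ¬ Untouch T e J := h
      push_neg at h'
      obtain ⟨J₁, hJ₁, hJ₁u⟩ := h'
      have hJu₁ : J₁ ∪ J ∈ 𝒥₁ :=
        h₁int hJ₁ h₁cap.1 Finset.subset_union_left
          (Finset.union_subset (h₁cap.2 J₁ hJ₁) (h₂cap.2 J hJ))
      have hJu₂ : J₁ ∪ J ∈ 𝒥₂ :=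
        h₂int hJ h₂cap.1 Finset.subset_union_right
          (Finset.union_subset (h₁cap.2 J₁ hJ₁) (h₂cap.2 J hJ))
      have hun : Untouch T e (J₁ ∪ J) := untouch_union T hJ₁u he
      exact (mem_qIdeal_iff κ T _ _).mp (haq _ ⟨hJu₁, hJu₂⟩ d) e hun
  -- assemble the two power series
  set f₁ : RRing κ T m := (fun d => mkq (u d) : RRing κ T m) with hf₁
  set f₂ : RRing κ T m := (fun d => mkq (v d) : RRing κ T m) with hf₂
  have hc₁ : ∀ d, MvPowerSeries.coeff (R := BRing κ T) d f₁ = mkq (u d) := fun d => rfl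
  have hc₂ : ∀ d, MvPowerSeries.coeff (R := BRing κ T) d f₂ = mkq (v d) := fun d => rfl
  have hsplit : f = f₁ + f₂ := by
    ext d
    rw [map_add, hc₁, hc₂, ← map_add, huv d, ha d]
  have hmem : ∀ (f' : RRing κ T m) (𝒥 : Set (Finset T)),
      (∀ J ∈ 𝒥, ∀ d, MvPowerSeries.coeff (R := BRing κ T) d f' ∈ (qIdeal κ T J).map mkq) →
      f' ∈ Icoll κ T m 𝒥 := by
    intro f' 𝒥 h
    rw [Icoll]
    rw [Submodule.mem_iInf]
    intro J
    rw [Submodule.mem_iInf]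
    intro hJ
    exact (mem_pideal_iff κ T m J f').mpr (h J hJ)
  have hf₁mem : f₁ ∈ Icoll κ T m 𝒥₁ := by
    refine hmem f₁ 𝒥₁ fun J hJ d => ?_
    rw [hc₁]
    exact Ideal.mem_map_of_mem _ (hu_mem J hJ d)
  have hf₂mem : f₂ ∈ Icoll κ T m 𝒥₂ := by
    refine hmem f₂ 𝒥₂ fun J hJ d => ?_
    rw [hc₂]
    exact Ideal.mem_map_of_mem _ (hv_mem J hJ d)
  rw [hsplit]
  exact Submodule.add_mem_sup hf₁mem hf₂mem
end
end
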